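/- arXiv:1807.07851 — 13 statements merged into one kernel-verified Lean document; each statement's English description precedes it below -/
import Mathlib

section
/- Let R be a commutative ring and a, b ⊆ R ideals. Then Γ̄_a(M) ⊆ Γ̄_b(M) for every R-module M if and only if b ⊆ √a. -/
/-- The small `a`-torsion submodule: elements killed by some power of `a`. -/
def smallTorsion {R : Type*} [CommRing R] (a : Ideal R) (M : Type*) [AddCommGroup M]
    [Module R M] : Submodule R M where
  carrier := {x | ∃ n : ℕ, ∀ r ∈ a ^ n, r • x = 0}
  zero_mem' := ⟨0, fun r _ => smul_zero r⟩
  add_mem' := by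
    rintro x y ⟨m, hm⟩ ⟨n, hn⟩
    refine ⟨m + n, fun r hr => ?_⟩
    have h1 : r ∈ a ^ m := Ideal.pow_le_pow_right (Nat.le_add_right m n) hr
    have h2 : r ∈ a ^ n := Ideal.pow_le_pow_right (Nat.le_add_left n m) hr
    rw [smul_add, hm r h1, hn r h2, add_zero]
  smul_mem' := by
    rintro c x ⟨n, hn⟩
    refine ⟨n, fun r hr => ?_⟩
    rw [smul_smul, mul_comm, ← smul_smul, hn r hr, smul_zero]

/-- The large `a`-torsion submodule: elements killed by a power of each element of `a`. -/
def largeTorsion {R : Type*} [CommRing R] (a : Ideal R) (M : Type*) [AddCommGroup M]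
    [Module R M] : Submodule R M where
  carrier := {x | ∀ r ∈ a, ∃ n : ℕ, r ^ n • x = 0}
  zero_mem' := fun r _ => ⟨1, smul_zero _⟩
  add_mem' := by
    rintro x y hx hy r hr
    obtain ⟨m, hm⟩ := hx r hr
    obtain ⟨n, hn⟩ := hy r hr
    refine ⟨m + n, ?_⟩
    have hx0 : r ^ (m + n) • x = 0 := by rw [pow_add, mul_comm, mul_smul, hm, smul_zero]
    have hy0 : r ^ (m + n) • y = 0 := by rw [pow_add, mul_smul, hn, smul_zero]
    rw [smul_add, hx0, hy0, add_zero]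
  smul_mem' := by
    intro c x hx r hr
    obtain ⟨n, hn⟩ := hx r hr
    exact ⟨n, by rw [smul_smul, mul_comm, ← smul_smul, hn, smul_zero]⟩

/-- The weak assassin of `M`: primes minimal over the annihilator of some element. -/
def weakAssassin (R : Type*) [CommRing R] (M : Type*) [AddCommGroup M] [Module R M] :
    Set (Ideal R) :=
  {p | ∃ x : M, p ∈ (Ideal.torsionOf R M x).minimalPrimes}

universe u

/-- `Γ̄_a(M) ⊆ Γ̄_b(M)` for every `R`-module `M` iff `b ⊆ √a`. -/
theorem stmt1 (R : Type u) [CommRing R] (a b : Ideal R) :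
    (∀ (M : Type u) [AddCommGroup M] [Module R M], largeTorsion a M ≤ largeTorsion b M) ↔
      b ≤ a.radical := by
  constructor
  · intro h r hr
    have h1 : (1 : R ⧸ a) ∈ largeTorsion a (R ⧸ a) := by
      intro s hs
      exact ⟨1, by
        have : (s : R) • (1 : R ⧸ a) = Ideal.Quotient.mk a s := by
          rw [Algebra.smul_def, mul_one, Ideal.Quotient.algebraMap_eq]
        simp [this, Ideal.Quotient.eq_zero_iff_mem.mpr hs]⟩
    obtain ⟨n, hn⟩ := h (R ⧸ a) h1 r hr
    refine ⟨n, ?_⟩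
    have : (r ^ n : R) • (1 : R ⧸ a) = Ideal.Quotient.mk a (r ^ n) := by
      rw [Algebra.smul_def, mul_one, Ideal.Quotient.algebraMap_eq]
    rw [this] at hn
    exact Ideal.Quotient.eq_zero_iff_mem.mp hn
  · intro hba M _ _ x hx r hr
    obtain ⟨k, hk⟩ := hba hr
    obtain ⟨n, hn⟩ := hx (r ^ k) hk
    exact ⟨k * n, by rw [pow_mul]; exact hn⟩
end

section
/- Let R be a commutative ring and a, b ⊆ R ideals. Then Γ̄_a(M) = Γ̄_b(M) for every R-module M if and only if √a = √b. -/
universe u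

lemma largeTorsion_radical {R : Type*} [CommRing R] (a : Ideal R) (M : Type*)
    [AddCommGroup M] [Module R M] : largeTorsion a.radical M = largeTorsion a M := by
  apply le_antisymm
  · intro x hx r hr
    exact hx r (Ideal.le_radical hr)
  · intro x hx r hr
    obtain ⟨m, hm⟩ := hr
    obtain ⟨n, hn⟩ := hx _ hm
    exact ⟨m * n, by rw [pow_mul]; exact hn⟩

lemma le_radical_of_largeTorsion {R : Type u} [CommRing R] {a b : Ideal R}
    (h : largeTorsion a (R ⧸ a) = largeTorsion b (R ⧸ a)) : b ≤ a.radical := by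
  have h1 : (1 : R ⧸ a) ∈ largeTorsion a (R ⧸ a) := by
    intro r hr
    refine ⟨1, ?_⟩
    have : r • (1 : R ⧸ a) = Ideal.Quotient.mk a r := by
      rw [Algebra.smul_def, mul_one]; rfl
    simp [pow_one, this, Ideal.Quotient.eq_zero_iff_mem.mpr hr]
  rw [h] at h1
  intro r hr
  obtain ⟨n, hn⟩ := h1 r hr
  refine ⟨n, ?_⟩
  have : (r ^ n) • (1 : R ⧸ a) = Ideal.Quotient.mk a (r ^ n) := by
    rw [Algebra.smul_def, mul_one]; rfl
  rw [this] at hn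
  exact Ideal.Quotient.eq_zero_iff_mem.mp hn

/-- `Γ̄_a(M) = Γ̄_b(M)` for every `R`-module `M` iff `√a = √b`. -/
theorem stmt2 (R : Type u) [CommRing R] (a b : Ideal R) :
    (∀ (M : Type u) [AddCommGroup M] [Module R M], largeTorsion a M = largeTorsion b M) ↔
      a.radical = b.radical := by
  constructor
  · intro h
    apply le_antisymm
    · rw [Ideal.radical_le_radical_iff]
      exact le_radical_of_largeTorsion (h (R ⧸ b)).symm
    · rw [Ideal.radical_le_radical_iff]
      exact le_radical_of_largeTorsion (h (R ⧸ a))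
  · intro h M _ _
    rw [← largeTorsion_radical a, ← largeTorsion_radical b, h]
end

section
/- Let R be a commutative ring and a ⊆ R an ideal. Then Γ̄_a(M) = M for every R-module M if and only if a is nil, i.e. every element of a is nilpotent. -/
universe u

/-- `Γ̄_a(M) = M` for every `R`-module `M` iff `a` is nil. -/
theorem stmt4 (R : Type u) [CommRing R] (a : Ideal R) :
    (∀ (M : Type u) [AddCommGroup M] [Module R M], largeTorsion a M = ⊤) ↔
      ∀ r ∈ a, IsNilpotent r := by
  constructor
  · intro h r hr
    have := h R
    have hx : (1 : R) ∈ largeTorsion a R := by rw [this]; trivial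
    obtain ⟨n, hn⟩ := hx r hr
    exact ⟨n, by simpa using hn⟩
  · intro h M _ _
    ext x
    simp only [Submodule.mem_top, iff_true]
    intro r hr
    obtain ⟨n, hn⟩ := h r hr
    exact ⟨n, by rw [hn, zero_smul]⟩
end

section
/- Let R be a commutative ring, a ⊆ R an ideal, and M an R-module. Then: (1) if Γ_a(M) = M then Assᶠ_R(M) ⊆ V(a); and (2) Assᶠ_R(M) ⊆ V(a) if and only if Γ̄_a(M) = M. -/
/-- (1) if `Γ_a(M) = M` then `Assᶠ_R(M) ⊆ V(a)`; and
(2) `Assᶠ_R(M) ⊆ V(a)` iff `Γ̄_a(M) = M`. -/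
theorem stmt5 (R : Type*) [CommRing R] (a : Ideal R)
    (M : Type*) [AddCommGroup M] [Module R M] :
    (smallTorsion a M = ⊤ → weakAssassin R M ⊆ {p : Ideal R | p.IsPrime ∧ a ≤ p}) ∧
    (weakAssassin R M ⊆ {p : Ideal R | p.IsPrime ∧ a ≤ p} ↔ largeTorsion a M = ⊤) := by
  constructor
  · intro hsmall p hp
    obtain ⟨x, hpx⟩ := hp
    have hprime : p.IsPrime := hpx.1.1
    refine ⟨hprime, fun s hs => ?_⟩
    have hx : x ∈ smallTorsion a M := by rw [hsmall]; trivial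
    obtain ⟨n, hn⟩ := hx
    have : s ^ n ∈ p := hpx.1.2 ((Ideal.mem_torsionOf_iff x _).mpr
      (hn _ (Ideal.pow_mem_pow hs n)))
    exact hprime.mem_of_pow_mem n this
  · constructor
    · intro hass
      ext x
      simp only [Submodule.mem_top, iff_true]
      show x ∈ largeTorsion a M
      intro r hr
      by_contra hcon
      push_neg at hcon
      have hrad : r ∉ (Ideal.torsionOf R M x).radical := by
        rintro ⟨n, hn⟩
        exact hcon n ((Ideal.mem_torsionOf_iff x _).mp hn)
      rw [← Ideal.sInf_minimalPrimes, Ideal.mem_sInf] at hrad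
      push_neg at hrad
      obtain ⟨p, hpmin, hrp⟩ := hrad
      exact hrp ((hass ⟨x, hpmin⟩).2 hr)
    · intro hlarge p hp
      obtain ⟨x, hpx⟩ := hp
      have hprime : p.IsPrime := hpx.1.1
      refine ⟨hprime, fun r hr => ?_⟩
      have hx : x ∈ largeTorsion a M := by rw [hlarge]; trivial
      obtain ⟨n, hn⟩ := hx r hr
      have : r ^ n ∈ Ideal.torsionOf R M x := (Ideal.mem_torsionOf_iff x _).mpr hn
      exact hprime.mem_of_pow_mem n (hpx.1.2 this)
end

section
/- Let R be a commutative ring and let a ⊆ R be an ideal generated by a set of idempotent elements. Then a is half-centred: for every R-module M, Γ_a(M) = M if and only if Assᶠ_R(M) ⊆ V(a). -/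
/-- an ideal generated by idempotents is half-centred. -/
theorem stmt6 (R : Type*) [CommRing R] (a : Ideal R)
    (hgen : ∃ E : Set R, (∀ e ∈ E, IsIdempotentElem e) ∧ a = Ideal.span E)
    (M : Type*) [AddCommGroup M] [Module R M] :
    smallTorsion a M = ⊤ ↔ weakAssassin R M ⊆ {p : Ideal R | p.IsPrime ∧ a ≤ p} := by
  obtain ⟨E, hE, rfl⟩ := hgen
  set a := Ideal.span E with ha
  have hsq : a ≤ a ^ 2 := by
    rw [pow_two]
    rw [ha, Ideal.span_le]
    intro e he
    have : e * e ∈ a * a := Ideal.mul_mem_mul (Ideal.subset_span he) (Ideal.subset_span he)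
    rwa [hE e he] at this
  have hpow : ∀ n : ℕ, a ≤ a ^ n := by
    intro n
    induction n with
    | zero => simp
    | succ n ih =>
      calc a ≤ a ^ 2 := hsq
        _ = a * a := pow_two a
        _ ≤ a ^ n * a := Ideal.mul_mono ih le_rfl
        _ = a ^ (n + 1) := (pow_succ a n).symm
  constructor
  · intro htop p hp
    obtain ⟨x, hx⟩ := hp
    have hprime : p.IsPrime := hx.1.1
    refine ⟨hprime, ?_⟩
    have hxmem : x ∈ smallTorsion a M := htop ▸ Submodule.mem_top
    obtain ⟨n, hn⟩ := hxmem
    have hann : a ≤ Ideal.torsionOf R M x := fun r hr => hn r (hpow n hr)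
    exact hann.trans hx.1.2
  · intro h
    rw [eq_top_iff]
    intro x _
    refine ⟨1, ?_⟩
    rw [pow_one]
    have key : ∀ e ∈ E, e • x = 0 := by
      intro e he
      by_contra hne
      set y := e • x with hy
      have hann : Ideal.torsionOf R M y ≠ ⊤ := by
        intro htop
        have : (1 : R) ∈ Ideal.torsionOf R M y := htop ▸ Submodule.mem_top
        rw [Ideal.mem_torsionOf_iff, one_smul] at this
        exact hne this
      obtain ⟨m, hm, hle⟩ := Ideal.exists_le_maximal _ hann
      obtain ⟨p, hp, hpm⟩ := Ideal.exists_minimalPrimes_le hle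
      have hpw : p ∈ weakAssassin R M := ⟨y, hp⟩
      obtain ⟨hprime, hap⟩ := h hpw
      have hep : e ∈ p := hap (Ideal.subset_span he)
      have h1e : (1 - e) ∈ Ideal.torsionOf R M y := by
        rw [Ideal.mem_torsionOf_iff, sub_smul, one_smul, hy, smul_smul, hE e he, sub_self]
      have h1ep : (1 - e) ∈ p := hp.1.2 h1e
      have : (1 : R) ∈ p := by
        have := p.add_mem h1ep hep
        rwa [sub_add_cancel] at this
      exact hprime.ne_top (Ideal.eq_top_of_isUnit_mem _ this isUnit_one)
    have : a ≤ Ideal.torsionOf R M x := by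
      rw [ha, Ideal.span_le]
      intro e he
      rw [SetLike.mem_coe, Ideal.mem_torsionOf_iff]
      exact key e he
    exact fun r hr => this hr
end

section
/- Let R be a commutative ring and a ⊆ R an ideal. Then Γ_a(M) = Γ̄_a(M) for every R-module M if and only if a is half-centred, i.e. for every R-module M one has Γ_a(M) = M if and only if Assᶠ_R(M) ⊆ V(a). -/
section Aux
variable {R : Type*} [CommRing R] (a : Ideal R) {M : Type*} [AddCommGroup M] [Module R M]

theorem mem_smallTorsion_iff (x : M) :
    x ∈ smallTorsion a M ↔ ∃ n : ℕ, ∀ r ∈ a ^ n, r • x = 0 := Iff.rfl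

theorem mem_largeTorsion_iff (x : M) :
    x ∈ largeTorsion a M ↔ ∀ r ∈ a, ∃ n : ℕ, r ^ n • x = 0 := Iff.rfl

theorem small_le_large : smallTorsion a M ≤ largeTorsion a M := by
  rintro x ⟨n, hn⟩ r hr
  exact ⟨n, hn _ (Ideal.pow_mem_pow hr n)⟩

theorem mem_largeTorsion_iff_radical (x : M) :
    x ∈ largeTorsion a M ↔ a ≤ (Ideal.torsionOf R M x).radical := by
  constructor
  · intro h r hr
    obtain ⟨n, hn⟩ := h r hr
    exact ⟨n, (Ideal.mem_torsionOf_iff x _).2 hn⟩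
  · intro h r hr
    obtain ⟨n, hn⟩ := h hr
    exact ⟨n, (Ideal.mem_torsionOf_iff x _).1 hn⟩

theorem le_radical_iff_minimalPrimes {I : Ideal R} :
    a ≤ I.radical ↔ ∀ p ∈ I.minimalPrimes, a ≤ p := by
  rw [← Ideal.sInf_minimalPrimes, le_sInf_iff]

theorem large_eq_top_iff :
    largeTorsion a M = ⊤ ↔ weakAssassin R M ⊆ {p : Ideal R | p.IsPrime ∧ a ≤ p} := by
  constructor
  · rintro h p ⟨x, hp⟩
    have hx : x ∈ largeTorsion a M := h ▸ Submodule.mem_top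
    rw [mem_largeTorsion_iff_radical] at hx
    exact ⟨hp.1.1, ((le_radical_iff_minimalPrimes a).1 hx) p hp⟩
  · intro h
    rw [eq_top_iff]
    intro x _
    rw [mem_largeTorsion_iff_radical, le_radical_iff_minimalPrimes]
    exact fun p hp => (h ⟨x, hp⟩).2

theorem torsionOf_submodule (N : Submodule R M) (x : N) :
    Ideal.torsionOf R N x = Ideal.torsionOf R M (x : M) := by
  ext r
  rw [Ideal.mem_torsionOf_iff, Ideal.mem_torsionOf_iff, ← Submodule.coe_smul,
    Subtype.ext_iff, Submodule.coe_zero]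

end Aux

universe u

/-- `Γ_a = Γ̄_a` iff `a` is half-centred. -/
theorem stmt7 (R : Type u) [CommRing R] (a : Ideal R) :
    (∀ (M : Type u) [AddCommGroup M] [Module R M], smallTorsion a M = largeTorsion a M) ↔
      (∀ (M : Type u) [AddCommGroup M] [Module R M],
        smallTorsion a M = ⊤ ↔ weakAssassin R M ⊆ {p : Ideal R | p.IsPrime ∧ a ≤ p}) := by

  constructor
  · intro heq M _ _
    rw [heq M]
    exact large_eq_top_iff a
  · intro h M _ _
    refine le_antisymm (small_le_large a) ?_
    intro x hx
    set N := largeTorsion a M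
    have hN : smallTorsion a N = ⊤ := by
      rw [h N]
      rintro p ⟨y, hp⟩
      rw [torsionOf_submodule] at hp
      have hy : (y : M) ∈ largeTorsion a M := y.2
      rw [mem_largeTorsion_iff_radical] at hy
      exact ⟨hp.1.1, ((le_radical_iff_minimalPrimes a).1 hy) p hp⟩
    have : (⟨x, hx⟩ : N) ∈ smallTorsion a N := hN ▸ Submodule.mem_top
    obtain ⟨n, hn⟩ := this
    refine ⟨n, fun r hr => ?_⟩
    have := hn r hr
    rw [Subtype.ext_iff] at this
    exact this
end

section
/- Let R be a commutative ring and a ⊆ R an ideal. If a has a power of finite type (i.e. a^n is a finitely generated ideal for some n ≥ 1) or a is generated by a set of idempotent elements, then Γ_a(M) = Γ̄_a(M) for every R-module M. -/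
/-- if `a` has a power of finite type or is generated by idempotents, then
`Γ_a(M) = Γ̄_a(M)` for every `R`-module `M`. -/
theorem stmt8 (R : Type*) [CommRing R] (a : Ideal R)
    (h : (∃ n : ℕ, 1 ≤ n ∧ (a ^ n).FG) ∨
      (∃ E : Set R, (∀ e ∈ E, IsIdempotentElem e) ∧ a = Ideal.span E))
    (M : Type*) [AddCommGroup M] [Module R M] :
    smallTorsion a M = largeTorsion a M := by
  apply le_antisymm
  · rintro x ⟨n, hn⟩ r hr
    exact ⟨n, hn _ (Ideal.pow_mem_pow hr n)⟩
  · rintro x hx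
    rcases h with ⟨n, hn1, hfg⟩ | ⟨E, hE, hEa⟩
    · have hrad : a ^ n ≤ (Ideal.torsionOf R M x).radical := by
        intro r hr
        obtain ⟨m, hm⟩ := hx r (Ideal.pow_le_self (by omega) hr)
        exact ⟨m, (Ideal.mem_torsionOf_iff x _).2 hm⟩
      obtain ⟨k, hk⟩ := Ideal.exists_pow_le_of_le_radical_of_fg hrad hfg
      refine ⟨n * k, fun r hr => ?_⟩
      rw [pow_mul] at hr
      exact (Ideal.mem_torsionOf_iff x r).1 (hk hr)
    · refine ⟨1, fun r hr => ?_⟩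
      rw [pow_one, hEa] at hr
      induction hr using Submodule.span_induction with
      | mem e he =>
        obtain ⟨m, hm⟩ := hx e (hEa ▸ Ideal.subset_span he)
        match m, hm with
        | 0, hm => simp only [pow_zero, one_smul] at hm; simp [hm]
        | k + 1, hm => rwa [(hE e he).pow_succ_eq k] at hm
      | zero => simp
      | add y z _ _ hy hz => rw [add_smul, hy, hz, add_zero]
      | smul c y _ hy => rw [smul_eq_mul, mul_smul, hy, smul_zero]
end

section
/- Let R be a commutative ring and a ⊆ R an ideal. The functor Γ̄_a is a radical: for every R-module M, the large a-torsion submodule of the quotient M/Γ̄_a(M) is zero, i.e. Γ̄_a(M/Γ̄_a(M)) = 0. -/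
/-- `Γ̄_a` is a radical: `Γ̄_a(M / Γ̄_a(M)) = 0`. -/
theorem stmt9 (R : Type*) [CommRing R] (a : Ideal R)
    (M : Type*) [AddCommGroup M] [Module R M] :
    largeTorsion a (M ⧸ largeTorsion a M) = ⊥ := by
  rw [eq_bot_iff]
  rintro x hx
  obtain ⟨y, rfl⟩ := Submodule.Quotient.mk_surjective _ x
  simp only [Submodule.mem_bot, Submodule.Quotient.mk_eq_zero]
  intro r hr
  obtain ⟨n, hn⟩ := hx r hr
  rw [← Submodule.Quotient.mk_smul, Submodule.Quotient.mk_eq_zero] at hn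
  obtain ⟨m, hm⟩ := hn r hr
  exact ⟨m + n, by rw [pow_add, mul_smul]; exact hm⟩
end

section
/- Let R be a commutative ring, a ⊆ R an ideal, and b ⊆ R an ideal such that the image of a in R/b is contained in Γ_a(R/b) (regarding R/b as an R-module) and Γ_a(R/b) ≠ R/b. Then Γ_a((R/b)/Γ_a(R/b)) ≠ 0. -/
/-- if the image of `a` in `R/b` is contained in `Γ_a(R/b) ≠ R/b`, then
`Γ_a((R/b)/Γ_a(R/b)) ≠ 0`. -/
theorem stmt11 (R : Type*) [CommRing R] (a b : Ideal R)
    (h1 : Submodule.map b.mkQ a ≤ smallTorsion a (R ⧸ b))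
    (h2 : smallTorsion a (R ⧸ b) ≠ ⊤) :
    smallTorsion a ((R ⧸ b) ⧸ smallTorsion a (R ⧸ b)) ≠ ⊥ := by
  set G := smallTorsion a (R ⧸ b) with hG
  intro h
  apply h2
  have hone : (b.mkQ 1) ∈ G := by
    have hz : G.mkQ (b.mkQ 1) ∈ smallTorsion a ((R ⧸ b) ⧸ G) := by
      refine ⟨1, fun r hr => ?_⟩
      rw [pow_one] at hr
      rw [← map_smul, Submodule.mkQ_apply, Submodule.Quotient.mk_eq_zero]
      have : r • (b.mkQ 1) = b.mkQ r := by
        rw [← map_smul, smul_eq_mul, mul_one]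
      rw [this]
      exact h1 ⟨r, hr, rfl⟩
    rw [h] at hz
    simpa [Submodule.Quotient.mk_eq_zero] using hz
  rw [eq_top_iff]
  rintro x -
  obtain ⟨r, rfl⟩ := b.mkQ_surjective x
  have : b.mkQ r = r • (b.mkQ 1) := by rw [← map_smul, smul_eq_mul, mul_one]
  rw [this]
  exact G.smul_mem r hone
end

section
/- Let R be a commutative ring and a ⊆ R an ideal, and let 0 → N → M → P → 0 be a short exact sequence of R-modules. Then Γ̄_a(M) = M if and only if Γ̄_a(N) = N and Γ̄_a(P) = P. In particular, the class of R-modules M with Γ̄_a(M) = M is a Serre class. -/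
/-- for a short exact sequence `0 → N → M → P → 0`, `Γ̄_a(M) = M` iff
`Γ̄_a(N) = N` and `Γ̄_a(P) = P`; together with `Γ̄_a(0) = 0` this says the class of
large `a`-torsion modules is a Serre class. -/
theorem stmt12 (R : Type*) [CommRing R] (a : Ideal R)
    (N M P : Type*) [AddCommGroup N] [Module R N] [AddCommGroup M] [Module R M]
    [AddCommGroup P] [Module R P]
    (f : N →ₗ[R] M) (g : M →ₗ[R] P)
    (hf : Function.Injective f) (hg : Function.Surjective g) (hfg : Function.Exact f g) :
    largeTorsion a M = ⊤ ↔ (largeTorsion a N = ⊤ ∧ largeTorsion a P = ⊤) := by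
  simp only [Submodule.eq_top_iff']
  constructor
  · intro hM
    constructor
    · intro x r hr
      obtain ⟨n, hn⟩ := hM (f x) r hr
      refine ⟨n, hf ?_⟩
      rw [map_smul, hn, map_zero]
    · intro x r hr
      obtain ⟨y, rfl⟩ := hg x
      obtain ⟨n, hn⟩ := hM y r hr
      exact ⟨n, by rw [← map_smul, hn, map_zero]⟩
  · rintro ⟨hN, hP⟩ x r hr
    obtain ⟨n, hn⟩ := hP (g x) r hr
    rw [← map_smul] at hn
    obtain ⟨y, hy⟩ := (hfg _).mp hn
    obtain ⟨m, hm⟩ := hN y r hr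
    refine ⟨n + m, ?_⟩
    rw [pow_add, mul_comm, mul_smul, ← hy, ← map_smul, hm, map_zero]
end

section
/- Let R be a commutative ring and let a ⊆ R be an ideal generated by a set of idempotent elements. Then every R-module M is of strongly bounded large a-torsion; in fact a·M ∩ Γ̄_a(M) = 0. -/
lemma key_ring {R : Type*} [CommRing R] (E : Set R) (hE : ∀ e ∈ E, IsIdempotentElem e) :
    ∀ r ∈ Ideal.span E, ∃ f ∈ Ideal.span E, (1 - f) * r = 0 := by
  intro r hr
  refine Submodule.span_induction (p := fun r _ => ∃ f ∈ Ideal.span E, (1 - f) * r = 0)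
    ?_ ?_ ?_ ?_ hr
  · intro e he
    exact ⟨e, Ideal.subset_span he, by have := hE e he; unfold IsIdempotentElem at this; ring_nf; linear_combination -this⟩
  · exact ⟨0, Submodule.zero_mem _, by ring⟩
  · rintro x y _ _ ⟨f, hf, hfx⟩ ⟨g, hg, hgy⟩
    refine ⟨f + g - f * g, ?_, ?_⟩
    · have : f + g - f * g = f * (1 - g) + g := by ring
      rw [this]
      exact Submodule.add_mem _ (Ideal.mul_mem_right _ _ hf) hg
    · have : (1 - (f + g - f * g)) * (x + y) = (1 - g) * ((1 - f) * x) + (1 - f) * ((1 - g) * y) := by ring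
      rw [this, hfx, hgy]; ring
  · rintro c x _ ⟨f, hf, hfx⟩
    exact ⟨f, hf, by rw [smul_eq_mul, mul_comm c x, ← mul_assoc, hfx, zero_mul]⟩

lemma key_mod {R : Type*} [CommRing R] (E : Set R) (hE : ∀ e ∈ E, IsIdempotentElem e)
    (M : Type*) [AddCommGroup M] [Module R M] :
    ∀ x ∈ Ideal.span E • (⊤ : Submodule R M), ∃ f ∈ Ideal.span E, (1 - f) • x = 0 := by
  intro x hx
  refine Submodule.smul_induction_on hx ?_ ?_
  · intro r hr m _
    obtain ⟨f, hf, hfr⟩ := key_ring E hE r hr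
    exact ⟨f, hf, by rw [smul_smul, hfr, zero_smul]⟩
  · rintro x y ⟨f, hf, hfx⟩ ⟨g, hg, hgy⟩
    refine ⟨f + g - f * g, ?_, ?_⟩
    · have : f + g - f * g = f * (1 - g) + g := by ring
      rw [this]
      exact Submodule.add_mem _ (Ideal.mul_mem_right _ _ hf) hg
    · have h1 : (1 - (f + g - f * g)) = (1 - g) * (1 - f) := by ring
      have h2 : (1 - (f + g - f * g)) = (1 - f) * (1 - g) := by ring
      rw [smul_add]
      rw [show (1 - (f + g - f * g)) • x = (1 - g) • ((1 - f) • x) by rw [h1, mul_smul]]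
      rw [show (1 - (f + g - f * g)) • y = (1 - f) • ((1 - g) • y) by rw [h2, mul_smul]]
      rw [hfx, hgy, smul_zero, smul_zero, add_zero]

/-- if `a` is generated by idempotents, then every `R`-module is of
strongly bounded large `a`-torsion; in fact `a·M ∩ Γ̄_a(M) = 0`. -/
theorem stmt15 (R : Type*) [CommRing R] (a : Ideal R)
    (hgen : ∃ E : Set R, (∀ e ∈ E, IsIdempotentElem e) ∧ a = Ideal.span E)
    (M : Type*) [AddCommGroup M] [Module R M] :
    (∃ n : ℕ, a ^ n • (⊤ : Submodule R M) ⊓ largeTorsion a M = ⊥) ∧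
    a • (⊤ : Submodule R M) ⊓ largeTorsion a M = ⊥ := by
  obtain ⟨E, hE, rfl⟩ := hgen
  have main : Ideal.span E • (⊤ : Submodule R M) ⊓ largeTorsion (Ideal.span E) M = ⊥ := by
    rw [eq_bot_iff]
    rintro x ⟨hx1, hx2⟩
    obtain ⟨f, hf, hfx⟩ := key_mod E hE M x hx1
    obtain ⟨n, hn⟩ := hx2 f hf
    have hfix : f • x = x := by
      have := hfx
      rw [sub_smul, one_smul, sub_eq_zero] at this
      exact this.symm
    have : ∀ m, f ^ m • x = x := by
      intro m
      induction m with
      | zero => simp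
      | succ k ih => rw [pow_succ, mul_comm, mul_smul, ih, hfix]
    rw [this n] at hn
    simp [hn]
  refine ⟨⟨1, by simpa using main⟩, main⟩
end

section
/- Let R be a commutative ring, a ⊆ R an ideal such that a^n is finitely generated for some n ≥ 1, and let S be a commutative R-algebra that is flat as an R-module. Then for every R-module M, the small aS-torsion submodule Γ_{aS}(S ⊗_R M) of the S-module S ⊗_R M equals the S-submodule of S ⊗_R M generated by the elements 1 ⊗ m with m ∈ Γ_a(M); equivalently, the canonical map S ⊗_R Γ_a(M) → Γ_{aS}(S ⊗_R M) is an isomorphism. -/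
open TensorProduct

section Aux

variable {R : Type*} [CommRing R] (S : Type*) [CommRing S] [Algebra R S] [Module.Flat R S]
variable {M : Type*} [AddCommGroup M] [Module R M]

/-- The span of the `1 ⊗ m`, `m ∈ N`, is the range of the base change of the inclusion. -/
lemma span_one_tmul_eq_range (N : Submodule R M) :
    Submodule.span S ((fun m : M => (1 : S) ⊗ₜ[R] m) '' (N : Set M)) =
      LinearMap.range (N.subtype.baseChange S) := by
  apply le_antisymm
  · rw [Submodule.span_le]
    rintro _ ⟨m, hm, rfl⟩
    exact ⟨(1 : S) ⊗ₜ[R] (⟨m, hm⟩ : N), rfl⟩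
  · rintro _ ⟨y, rfl⟩
    induction y using TensorProduct.induction_on with
    | zero => simp
    | tmul s m =>
        have : (N.subtype.baseChange S) (s ⊗ₜ[R] m) = s • ((1 : S) ⊗ₜ[R] (m : M)) := by
          simp [TensorProduct.smul_tmul']
        rw [this]
        exact Submodule.smul_mem _ _ (Submodule.subset_span ⟨m, m.2, rfl⟩)
    | add y z hy hz => rw [map_add]; exact add_mem hy hz

lemma key_lemma (T : Finset R) :
    ∀ (M : Type _) [AddCommGroup M] [Module R M] (x : S ⊗[R] M),
      (∀ t ∈ T, algebraMap R S t • x = 0) →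
      x ∈ Submodule.span S
        ((fun m : M => (1 : S) ⊗ₜ[R] m) '' (Submodule.torsionBySet R M ↑T : Set M)) := by
  classical
  induction T using Finset.induction_on with
  | empty =>
      intro M _ _ x hx
      clear hx
      induction x using TensorProduct.induction_on with
      | zero => exact zero_mem _
      | tmul s m =>
          have : (s ⊗ₜ[R] m : S ⊗[R] M) = s • ((1 : S) ⊗ₜ[R] m) := by
            simp [TensorProduct.smul_tmul']
          rw [this]
          have hmem : m ∈ Submodule.torsionBySet R M ↑(∅ : Finset R) := by
            rw [Submodule.mem_torsionBySet_iff]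
            rintro ⟨t, ht⟩
            simp at ht
          exact Submodule.smul_mem _ _ (Submodule.subset_span ⟨m, hmem, rfl⟩)
      | add y z hy hz => exact add_mem hy hz
  | @insert r T hrT ih =>
      intro M _ _ x hx
      set N : Submodule R M := Submodule.torsionBySet R M ↑T with hN
      have hxN : x ∈ LinearMap.range (N.subtype.baseChange S) := by
        rw [← span_one_tmul_eq_range]
        exact ih M x fun t ht => hx t (Finset.mem_insert_of_mem ht)
      obtain ⟨y, rfl⟩ := hxN
      have hry : r • y = 0 := by
        have h1 : algebraMap R S r • (N.subtype.baseChange S) y = 0 :=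
          hx r (Finset.mem_insert_self r T)
        have h2 : (N.subtype.baseChange S) (algebraMap R S r • y) = 0 := by
          rw [map_smul]; exact h1
        have hinj : Function.Injective (N.subtype.baseChange S) := by
          rw [show ⇑(N.subtype.baseChange S) = ⇑(N.subtype.lTensor S) from
            LinearMap.baseChange_eq_ltensor _]
          exact Module.Flat.lTensor_preserves_injective_linearMap _ N.injective_subtype
        have := hinj (h2.trans (map_zero _).symm)
        rwa [algebraMap_smul] at this
      -- `r • y = lTensor S (r • id) y`
      have hker : (LinearMap.lTensor S ((r : R) • (LinearMap.id : N →ₗ[R] N))) y = 0 := by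
        rw [LinearMap.lTensor_smul, LinearMap.lTensor_id]
        simpa using hry
      have hexact := Module.Flat.lTensor_exact S
        (LinearMap.exact_subtype_ker_map ((r : R) • (LinearMap.id : N →ₗ[R] N)))
      obtain ⟨z, hz⟩ := (hexact y).mp hker
      -- now push forward
      have key : ∀ w : S ⊗[R] (LinearMap.ker ((r : R) • (LinearMap.id : N →ₗ[R] N))),
          (N.subtype.baseChange S) ((LinearMap.ker
            ((r : R) • (LinearMap.id : N →ₗ[R] N))).subtype.lTensor S w) ∈
          Submodule.span S ((fun m : M => (1 : S) ⊗ₜ[R] m) ''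
            (Submodule.torsionBySet R M ↑(insert r T) : Set M)) := by
        intro w
        induction w using TensorProduct.induction_on with
        | zero => simp
        | tmul s v =>
            have hmem : ((v : N) : M) ∈ Submodule.torsionBySet R M ↑(insert r T) := by
              rw [Submodule.mem_torsionBySet_iff]
              rintro ⟨t, ht⟩
              rcases Finset.mem_insert.mp ht with h | h
              · subst h
                have := v.2
                rw [LinearMap.mem_ker] at this
                have : (t : R) • (v : N) = 0 := this
                exact congrArg (Submodule.subtype N) this
              · exact (Submodule.mem_torsionBySet_iff _ _).mp (v : N).2 ⟨t, h⟩
            have : (N.subtype.baseChange S)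
                ((LinearMap.ker ((r : R) • (LinearMap.id : N →ₗ[R] N))).subtype.lTensor S
                  (s ⊗ₜ[R] v)) = s • ((1 : S) ⊗ₜ[R] (((v : N) : M))) := by
              simp [TensorProduct.smul_tmul']
            rw [this]
            exact Submodule.smul_mem _ _ (Submodule.subset_span ⟨_, hmem, rfl⟩)
        | add w₁ w₂ h1 h2 => rw [map_add, map_add]; exact add_mem h1 h2
      rw [← hz]
      exact key z

end Aux


/-- flat base change for small torsion when some power of `a` is finitely
generated: `Γ_{aS}(S ⊗_R M)` is the `S`-submodule generated by the `1 ⊗ m`,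
`m ∈ Γ_a(M)`. -/
theorem stmt16 (R : Type*) [CommRing R] (a : Ideal R)
    (hfg : ∃ n : ℕ, 1 ≤ n ∧ (a ^ n).FG)
    (S : Type*) [CommRing S] [Algebra R S] [Module.Flat R S]
    (M : Type*) [AddCommGroup M] [Module R M] :
    smallTorsion (a.map (algebraMap R S)) (S ⊗[R] M) =
      Submodule.span S ((fun m : M => (1 : S) ⊗ₜ[R] m) '' (smallTorsion a M : Set M)) := by
  
  classical
  obtain ⟨n, hn1, hfgn⟩ := hfg
  apply le_antisymm
  · -- hard direction
    rintro x ⟨k, hk⟩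
    have hfgb : (a ^ (n * k)).FG := by
      rw [pow_mul]
      exact Submodule.FG.pow hfgn k
    obtain ⟨T, hT⟩ := hfgb
    have hTx : ∀ t ∈ T, algebraMap R S t • x = 0 := by
      intro t ht
      have h1 : t ∈ a ^ (n * k) := hT ▸ Ideal.subset_span ht
      have h2 : t ∈ a ^ k := Ideal.pow_le_pow_right (Nat.le_mul_of_pos_left k hn1) h1
      have h3 : algebraMap R S t ∈ a.map (algebraMap R S) ^ k := by
        rw [← Ideal.map_pow]
        exact Ideal.mem_map_of_mem _ h2
      exact hk _ h3
    have := key_lemma S T M x hTx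
    refine Submodule.span_mono ?_ this
    apply Set.image_mono
    intro m hm
    refine ⟨n * k, fun r hr => ?_⟩
    rw [← hT] at hr
    have : Ideal.span (T : Set R) ≤ Ideal.torsionOf R M m := by
      rw [Ideal.span_le]
      intro t ht
      exact (Submodule.mem_torsionBySet_iff _ _).mp hm ⟨t, ht⟩
    exact this hr
  · rw [Submodule.span_le]
    rintro _ ⟨m, hm, rfl⟩
    obtain ⟨k, hk⟩ := hm
    refine ⟨k, fun r hr => ?_⟩
    rw [← Ideal.map_pow] at hr
    have hle : (a ^ k).map (algebraMap R S) ≤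
        LinearMap.ker (LinearMap.toSpanSingleton S (S ⊗[R] M) ((1 : S) ⊗ₜ[R] m)) := by
      rw [Ideal.map_le_iff_le_comap]
      intro t ht
      simp only [Ideal.mem_comap, LinearMap.mem_ker, LinearMap.toSpanSingleton_apply]
      rw [algebraMap_smul, ← TensorProduct.tmul_smul, hk t ht, TensorProduct.tmul_zero]
    exact hle hr
end

section
/- Let R be a commutative ring and a ⊆ R an ideal. Suppose that Γ_a preserves surjections, i.e. for every surjective morphism h : M → P of R-modules the induced map Γ_a(M) → Γ_a(P) is surjective. Then Γ_a is a radical (Γ_a(M/Γ_a(M)) = 0 for every R-module M) and R = Γ_a(R) + a. -/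
universe u

/-- if `Γ_a` preserves surjections, then `Γ_a` is a radical and
`R = Γ_a(R) + a`. -/
theorem stmt18 (R : Type u) [CommRing R] (a : Ideal R)
    (hsurj : ∀ (M P : Type u) [AddCommGroup M] [Module R M] [AddCommGroup P] [Module R P]
      (h : M →ₗ[R] P), Function.Surjective h →
        ∀ y ∈ smallTorsion a P, ∃ x ∈ smallTorsion a M, h x = y) :
    (∀ (M : Type u) [AddCommGroup M] [Module R M],
      smallTorsion a (M ⧸ smallTorsion a M) = ⊥) ∧
    smallTorsion a R ⊔ a = ⊤ := by
  constructor
  · intro M _ _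
    rw [eq_bot_iff]
    intro y hy
    obtain ⟨x, hx, hxy⟩ := hsurj M (M ⧸ smallTorsion a M)
      (smallTorsion a M).mkQ (Submodule.mkQ_surjective _) y hy
    have : (smallTorsion a M).mkQ x = 0 := (Submodule.Quotient.mk_eq_zero _).mpr hx
    simp [← hxy, this]
  · -- lift 1 from R/a, which is entirely a-torsion
    have hall : ∀ y : R ⧸ a, y ∈ smallTorsion a (R ⧸ a) := by
      intro y
      obtain ⟨s, rfl⟩ := Submodule.mkQ_surjective a y
      refine ⟨1, fun r hr => ?_⟩
      rw [pow_one] at hr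
      have : r • (a.mkQ s) = a.mkQ (r • s) := (map_smul a.mkQ r s).symm
      rw [this, Submodule.mkQ_apply, Submodule.Quotient.mk_eq_zero, smul_eq_mul]
      exact Ideal.mul_mem_right s a hr
    obtain ⟨x, hx, hxy⟩ := hsurj R (R ⧸ a) a.mkQ (Submodule.mkQ_surjective a)
      (a.mkQ 1) (hall _)
    have h1x : (1 : R) - x ∈ a := by
      have := hxy
      rw [Submodule.mkQ_apply, Submodule.mkQ_apply, Submodule.Quotient.eq] at this
      simpa using a.neg_mem this
    rw [Ideal.eq_top_iff_one]
    have : (1 : R) = x + (1 - x) := by ring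
    rw [this]
    exact Submodule.add_mem_sup hx h1x
end
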